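/- arXiv:2105.03153 — 5 statements merged into one kernel-verified Lean document; each statement's English description precedes it below -/
import Mathlib

section
/- There exists a dataset with 3 points and labels in {1,2,3}, group attribute in {0,1}, and a predictor f, such that f satisfies pairwise demographic parity on the dataset but not standard demographic parity. Concretely, take points with (label predictions, groups) given by f(x₁)=1, f(x₂)=2, f(x₃)=3 and a₁=0, a₂=1, a₃=0; then the counting-fraction versions of pairwise DP hold while standard DP fails. -/
open Finset

/-- There is a 3-point dataset with labels in `{1,2,3}` and groups in `{0,1}`, namely
`f = (1,2,3)` and `a = (0,1,0)`, on which the counting-fraction version of pairwise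
demographic parity holds while standard demographic parity fails. -/
theorem pairwise_DP_not_standard_DP :
    ∃ (f a : Fin 3 → ℕ), f = ![1, 2, 3] ∧ a = ![0, 1, 0] ∧
      (∀ aT aH : ℕ,
        (univ.filter (fun p : Fin 3 × Fin 3 =>
            a p.1 = aT ∧ a p.2 = aH ∧ f p.2 < f p.1)).card =
        (univ.filter (fun p : Fin 3 × Fin 3 =>
            a p.1 = aT ∧ a p.2 = aH ∧ f p.1 < f p.2)).card) ∧
      ¬ (∀ (yT aT aH : ℕ),
          ((univ.filter (fun i : Fin 3 => a i = aT ∧ f i = yT)).card : ℚ) /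
            ((univ.filter (fun i : Fin 3 => a i = aT)).card : ℚ) =
          ((univ.filter (fun i : Fin 3 => a i = aH ∧ f i = yT)).card : ℚ) /
            ((univ.filter (fun i : Fin 3 => a i = aH)).card : ℚ)) := by
  refine ⟨![1,2,3], ![0,1,0], rfl, rfl, ?_, ?_⟩
  · intro aT aH
    rcases aT with _|_|aT <;> rcases aH with _|_|aH
    · decide
    · decide
    · rw [Finset.filter_false_of_mem, Finset.filter_false_of_mem] <;>
        (intro p _; fin_cases p <;> simp <;> omega)
    · decide
    · decide
    · rw [Finset.filter_false_of_mem, Finset.filter_false_of_mem] <;>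
        (intro p _; fin_cases p <;> simp <;> omega)
    all_goals
      rw [Finset.filter_false_of_mem, Finset.filter_false_of_mem] <;>
        (intro p _; fin_cases p <;> simp <;> omega)
  · intro h
    have := h 2 0 1
    rw [show (univ.filter (fun i : Fin 3 => ![0,1,0] i = 0 ∧ ![1,2,3] i = 2)).card = 0 from by decide,
        show (univ.filter (fun i : Fin 3 => ![0,1,0] i = (0:ℕ))).card = 2 from by decide,
        show (univ.filter (fun i : Fin 3 => ![0,1,0] i = 1 ∧ ![1,2,3] i = 2)).card = 1 from by decide,
        show (univ.filter (fun i : Fin 3 => ![0,1,0] i = (1:ℕ))).card = 1 from by decide] at this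
    norm_num at this
end

section
/- There exists a dataset of 9 points with labels in {1,2,3} and binary group attribute, and a predictor f, such that f satisfies equalized odds on the dataset but violates pairwise equal opportunity. Concretely, with datapoints (y, a) = (1,0),(2,0),(3,0),(3,0),(1,1),(2,1),(2,1),(3,1),(3,1) and predictions 1,2,3,2,1,2,2,3,2 respectively, empirical equalized odds holds but the empirical pairwise EO condition fails. -/
open Finset

private lemma auxF (b c n : ℕ) :
    (univ.filter (fun i : Fin 9 => (![0,0,0,0,1,1,1,1,1] : Fin 9 → ℕ) i = b ∧
      (![1,2,3,3,1,2,2,3,3] : Fin 9 → ℕ) i = c ∧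
      (![1,2,3,2,1,2,2,3,2] : Fin 9 → ℕ) i = n + 4)).card = 0 := by
  rw [Finset.card_eq_zero, Finset.filter_eq_empty_iff]
  rintro i - ⟨h1, h2, h3⟩
  have hle : (![1,2,3,2,1,2,2,3,2] : Fin 9 → ℕ) i ≤ 3 := by fin_cases i <;> decide
  omega

/-- There is a 9-point dataset with labels in `{1,2,3}` and binary groups, and a
predictor, such that empirical equalized odds holds (for all nonempty conditioning
sets) while the empirical pairwise equal-opportunity condition fails. -/
theorem equalized_odds_not_pairwise_EO :
    ∃ (y a f : Fin 9 → ℕ),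
      y = ![1, 2, 3, 3, 1, 2, 2, 3, 3] ∧
      a = ![0, 0, 0, 0, 1, 1, 1, 1, 1] ∧
      f = ![1, 2, 3, 2, 1, 2, 2, 3, 2] ∧
      -- empirical equalized odds
      (∀ (yT yH aT aH : ℕ),
        (univ.filter (fun i : Fin 9 => a i = aT ∧ y i = yT)).Nonempty →
        (univ.filter (fun i : Fin 9 => a i = aH ∧ y i = yT)).Nonempty →
        ((univ.filter (fun i : Fin 9 => a i = aT ∧ y i = yT ∧ f i = yH)).card : ℚ) /
          ((univ.filter (fun i : Fin 9 => a i = aT ∧ y i = yT)).card : ℚ) =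
        ((univ.filter (fun i : Fin 9 => a i = aH ∧ y i = yT ∧ f i = yH)).card : ℚ) /
          ((univ.filter (fun i : Fin 9 => a i = aH ∧ y i = yT)).card : ℚ)) ∧
      -- empirical pairwise EO fails
      ¬ (∀ aT aH : ℕ,
          ((univ.filter (fun p : Fin 9 × Fin 9 =>
              a p.1 = aT ∧ a p.2 = aH ∧ y p.2 < y p.1 ∧ f p.2 < f p.1)).card : ℚ) /
            ((univ.filter (fun p : Fin 9 × Fin 9 =>
              a p.1 = aT ∧ a p.2 = aH ∧ y p.2 < y p.1)).card : ℚ) =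
          ((univ.filter (fun p : Fin 9 × Fin 9 =>
              a p.1 = aT ∧ a p.2 = aH ∧ y p.1 < y p.2 ∧ f p.1 < f p.2)).card : ℚ) /
            ((univ.filter (fun p : Fin 9 × Fin 9 =>
              a p.1 = aT ∧ a p.2 = aH ∧ y p.1 < y p.2)).card : ℚ)) := by
  refine ⟨![1,2,3,3,1,2,2,3,3], ![0,0,0,0,1,1,1,1,1], ![1,2,3,2,1,2,2,3,2],
    rfl, rfl, rfl, ?_, ?_⟩
  · intro yT yH aT aH h1 h2
    obtain ⟨i, hi⟩ := h1
    obtain ⟨j, hj⟩ := h2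
    simp only [mem_filter, mem_univ, true_and] at hi hj
    have hbi : (![0,0,0,0,1,1,1,1,1] : Fin 9 → ℕ) i ≤ 1 := by fin_cases i <;> decide
    have hbj : (![0,0,0,0,1,1,1,1,1] : Fin 9 → ℕ) j ≤ 1 := by fin_cases j <;> decide
    have hyi : 1 ≤ (![1,2,3,3,1,2,2,3,3] : Fin 9 → ℕ) i ∧
        (![1,2,3,3,1,2,2,3,3] : Fin 9 → ℕ) i ≤ 3 := by fin_cases i <;> decide
    have hA : aT = 0 ∨ aT = 1 := by have := hi.1; omega
    have hY : yT = 1 ∨ yT = 2 ∨ yT = 3 := by have := hi.2; omega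
    have hB : aH = 0 ∨ aH = 1 := by have := hj.1; omega
    clear hi hj
    rcases hA with rfl | rfl <;> rcases hB with rfl | rfl <;>
      rcases hY with rfl | rfl | rfl <;>
      rcases yH with _ | _ | _ | _ | n <;>
      first
        | (rw [div_eq_div_iff (by rw [Nat.cast_ne_zero]; decide)
            (by rw [Nat.cast_ne_zero]; decide)]
           norm_cast)
        | simp [auxF]
  · intro h
    have h01 := h 0 1
    rw [div_eq_div_iff (by rw [Nat.cast_ne_zero]; decide)
      (by rw [Nat.cast_ne_zero]; decide)] at h01
    norm_cast at h01
end

section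
/- In the T-shirt example: for the family of predictions parameterized by n ≥ 1 (Vendor A has one 1-star, n 2-star, and two 3-star shirts; Vendor B has one 1-star, one 2-star, and 2n 3-star shirts; all predictions are correct except that exactly half of each vendor's 3-star shirts are predicted as 2 stars — one of Vendor A's two and n of Vendor B's 2n), the empirical pairwise-EO probabilities are P[pred_A > pred_B | true_A > true_B] = (n+3)/(n+4) and P[pred_A < pred_B | true_A < true_B] = (1+2n+n²)/(1+2n+2n²), and hence the empirical EOviol tends to 1/2 as n → ∞. -/
open Finset

/-- True labels of Vendor A's shirts: one 1-star, `n` 2-star, two 3-star. -/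
def tshirtTrueA (n : ℕ) (i : Fin (n + 3)) : ℕ :=
  if (i : ℕ) = 0 then 1 else if (i : ℕ) ≤ n then 2 else 3

/-- Predictions for Vendor A: correct except one of the two 3-star shirts gets 2. -/
def tshirtPredA (n : ℕ) (i : Fin (n + 3)) : ℕ :=
  if (i : ℕ) = n + 1 then 2 else tshirtTrueA n i

/-- True labels of Vendor B's shirts: one 1-star, one 2-star, `2n` 3-star. -/
def tshirtTrueB (n : ℕ) (i : Fin (2 * n + 2)) : ℕ :=
  if (i : ℕ) = 0 then 1 else if (i : ℕ) = 1 then 2 else 3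

/-- Predictions for Vendor B: correct except `n` of the `2n` 3-star shirts get 2. -/
def tshirtPredB (n : ℕ) (i : Fin (2 * n + 2)) : ℕ :=
  if 2 ≤ (i : ℕ) ∧ (i : ℕ) ≤ n + 1 then 2 else tshirtTrueB n i

/-- Fraction of (A-shirt, B-shirt) pairs with strictly larger A ground truth on which
the A prediction is strictly larger. -/
noncomputable def tshirtFracGT (n : ℕ) : ℚ :=
  ((univ.filter (fun q : Fin (n + 3) × Fin (2 * n + 2) =>
      tshirtTrueB n q.2 < tshirtTrueA n q.1 ∧ tshirtPredB n q.2 < tshirtPredA n q.1)).card : ℚ) /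
    ((univ.filter (fun q : Fin (n + 3) × Fin (2 * n + 2) =>
      tshirtTrueB n q.2 < tshirtTrueA n q.1)).card : ℚ)

/-- Fraction of (A-shirt, B-shirt) pairs with strictly smaller A ground truth on which
the A prediction is strictly smaller. -/
noncomputable def tshirtFracLT (n : ℕ) : ℚ :=
  ((univ.filter (fun q : Fin (n + 3) × Fin (2 * n + 2) =>
      tshirtTrueA n q.1 < tshirtTrueB n q.2 ∧ tshirtPredA n q.1 < tshirtPredB n q.2)).card : ℚ) /
    ((univ.filter (fun q : Fin (n + 3) × Fin (2 * n + 2) =>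
      tshirtTrueA n q.1 < tshirtTrueB n q.2)).card : ℚ)

lemma card_filter_fin_prod (a b : ℕ) (P : Fin a × Fin b → Prop) [DecidablePred P]
    (Q : ℕ → ℕ → Prop) [∀ i j, Decidable (Q i j)]
    (h : ∀ q : Fin a × Fin b, P q ↔ Q q.1.val q.2.val) :
    (univ.filter P).card = (((range a) ×ˢ (range b)).filter fun p => Q p.1 p.2).card := by
  apply Finset.card_bij (fun q _ => (q.1.val, q.2.val))
  · intro q hq
    simp only [mem_filter, mem_product, mem_range, mem_univ, true_and] at *
    exact ⟨⟨q.1.isLt, q.2.isLt⟩, (h q).1 hq⟩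
  · intro q1 h1 q2 h2 he
    simp only [Prod.mk.injEq] at he
    exact Prod.ext (Fin.ext he.1) (Fin.ext he.2)
  · intro p hp
    simp only [mem_filter, mem_product, mem_range] at hp
    exact ⟨(⟨p.1, hp.1.1⟩, ⟨p.2, hp.1.2⟩), by simp [mem_filter, (h _).2, hp.2], rfl⟩

lemma cardGT_denom (n : ℕ) (hn : 1 ≤ n) :
    ((univ.filter (fun q : Fin (n + 3) × Fin (2 * n + 2) =>
      tshirtTrueB n q.2 < tshirtTrueA n q.1)).card) = n + 4 := by
  rw [card_filter_fin_prod _ _ _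
      (fun i j => (1 ≤ i ∧ i ≤ n ∧ j = 0) ∨ (n + 1 ≤ i ∧ i ≤ n + 2 ∧ j ≤ 1))
      (fun q => by
        have h1 := q.1.isLt; have h2 := q.2.isLt
        simp only [tshirtTrueA, tshirtTrueB]
        split_ifs <;> omega)]
  have hset : ((range (n + 3) ×ˢ range (2 * n + 2)).filter
      fun p => (1 ≤ p.1 ∧ p.1 ≤ n ∧ p.2 = 0) ∨ (n + 1 ≤ p.1 ∧ p.1 ≤ n + 2 ∧ p.2 ≤ 1))
      = (Finset.Icc 1 n) ×ˢ {0} ∪ (Finset.Icc (n+1) (n+2)) ×ˢ (Finset.Icc 0 1) := by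
    ext ⟨i, j⟩
    simp only [mem_filter, mem_product, mem_range, mem_union, mem_Icc, mem_singleton]
    omega
  rw [hset, card_union_of_disjoint (by
    simp only [Finset.disjoint_left, mem_product, mem_Icc, mem_singleton]
    rintro ⟨i, j⟩ h1 h2; omega), card_product, card_product]
  simp [Nat.card_Icc]

lemma cardGT_num (n : ℕ) (hn : 1 ≤ n) :
    ((univ.filter (fun q : Fin (n + 3) × Fin (2 * n + 2) =>
      tshirtTrueB n q.2 < tshirtTrueA n q.1 ∧ tshirtPredB n q.2 < tshirtPredA n q.1)).card)
      = n + 3 := by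
  rw [card_filter_fin_prod _ _ _
      (fun i j => (1 ≤ i ∧ i ≤ n + 2 ∧ j = 0) ∨ (i = n + 2 ∧ j = 1))
      (fun q => by
        have h1 := q.1.isLt; have h2 := q.2.isLt
        simp only [tshirtTrueA, tshirtTrueB, tshirtPredA, tshirtPredB]
        split_ifs <;> omega)]
  have hset : ((range (n + 3) ×ˢ range (2 * n + 2)).filter
      fun p => (1 ≤ p.1 ∧ p.1 ≤ n + 2 ∧ p.2 = 0) ∨ (p.1 = n + 2 ∧ p.2 = 1))
      = (Finset.Icc 1 (n + 2)) ×ˢ {0} ∪ ({n + 2} : Finset ℕ) ×ˢ {1} := by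
    ext ⟨i, j⟩
    simp only [mem_filter, mem_product, mem_range, mem_union, mem_Icc, mem_singleton]
    omega
  rw [hset, card_union_of_disjoint (by
    simp only [Finset.disjoint_left, mem_product, mem_Icc, mem_singleton]
    rintro ⟨i, j⟩ h1 h2; omega), card_product, card_product]
  simp [Nat.card_Icc]

lemma cardLT_denom (n : ℕ) (hn : 1 ≤ n) :
    ((univ.filter (fun q : Fin (n + 3) × Fin (2 * n + 2) =>
      tshirtTrueA n q.1 < tshirtTrueB n q.2)).card) = 2 * n ^ 2 + 2 * n + 1 := by
  rw [card_filter_fin_prod _ _ _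
      (fun i j => (i = 0 ∧ 1 ≤ j ∧ j ≤ 2 * n + 1) ∨ (1 ≤ i ∧ i ≤ n ∧ 2 ≤ j ∧ j ≤ 2 * n + 1))
      (fun q => by
        have h1 := q.1.isLt; have h2 := q.2.isLt
        simp only [tshirtTrueA, tshirtTrueB]
        split_ifs <;> omega)]
  have hset : ((range (n + 3) ×ˢ range (2 * n + 2)).filter
      fun p => (p.1 = 0 ∧ 1 ≤ p.2 ∧ p.2 ≤ 2 * n + 1) ∨
        (1 ≤ p.1 ∧ p.1 ≤ n ∧ 2 ≤ p.2 ∧ p.2 ≤ 2 * n + 1))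
      = ({0} : Finset ℕ) ×ˢ (Finset.Icc 1 (2 * n + 1)) ∪
        (Finset.Icc 1 n) ×ˢ (Finset.Icc 2 (2 * n + 1)) := by
    ext ⟨i, j⟩
    simp only [mem_filter, mem_product, mem_range, mem_union, mem_Icc, mem_singleton]
    omega
  rw [hset, card_union_of_disjoint (by
    simp only [Finset.disjoint_left, mem_product, mem_Icc, mem_singleton]
    rintro ⟨i, j⟩ h1 h2; omega), card_product, card_product]
  simp [Nat.card_Icc]
  ring

lemma cardLT_num (n : ℕ) (hn : 1 ≤ n) :
    ((univ.filter (fun q : Fin (n + 3) × Fin (2 * n + 2) =>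
      tshirtTrueA n q.1 < tshirtTrueB n q.2 ∧ tshirtPredA n q.1 < tshirtPredB n q.2)).card)
      = n ^ 2 + 2 * n + 1 := by
  rw [card_filter_fin_prod _ _ _
      (fun i j => (i = 0 ∧ 1 ≤ j ∧ j ≤ 2 * n + 1) ∨
        (1 ≤ i ∧ i ≤ n ∧ n + 2 ≤ j ∧ j ≤ 2 * n + 1))
      (fun q => by
        have h1 := q.1.isLt; have h2 := q.2.isLt
        simp only [tshirtTrueA, tshirtTrueB, tshirtPredA, tshirtPredB]
        split_ifs <;> omega)]
  have hset : ((range (n + 3) ×ˢ range (2 * n + 2)).filter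
      fun p => (p.1 = 0 ∧ 1 ≤ p.2 ∧ p.2 ≤ 2 * n + 1) ∨
        (1 ≤ p.1 ∧ p.1 ≤ n ∧ n + 2 ≤ p.2 ∧ p.2 ≤ 2 * n + 1))
      = ({0} : Finset ℕ) ×ˢ (Finset.Icc 1 (2 * n + 1)) ∪
        (Finset.Icc 1 n) ×ˢ (Finset.Icc (n + 2) (2 * n + 1)) := by
    ext ⟨i, j⟩
    simp only [mem_filter, mem_product, mem_range, mem_union, mem_Icc, mem_singleton]
    omega
  rw [hset, card_union_of_disjoint (by
    simp only [Finset.disjoint_left, mem_product, mem_Icc, mem_singleton]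
    rintro ⟨i, j⟩ h1 h2; omega), card_product, card_product]
  simp [Nat.card_Icc]
  have h : 2 * n - n = n := by omega
  rw [h]
  ring

lemma fracGT_eq (n : ℕ) (hn : 1 ≤ n) :
    tshirtFracGT n = ((n : ℚ) + 3) / ((n : ℚ) + 4) := by
  rw [tshirtFracGT, cardGT_num n hn, cardGT_denom n hn]
  push_cast
  ring_nf

lemma fracLT_eq (n : ℕ) (hn : 1 ≤ n) :
    tshirtFracLT n = (1 + 2 * (n : ℚ) + (n : ℚ) ^ 2) / (1 + 2 * (n : ℚ) + 2 * (n : ℚ) ^ 2) := by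
  rw [tshirtFracLT, cardLT_num n hn, cardLT_denom n hn]
  push_cast
  ring_nf

/-- T-shirt example: the empirical pairwise-EO probabilities are `(n+3)/(n+4)` and
`(1+2n+n²)/(1+2n+2n²)`, and the empirical EO violation tends to `1/2` as `n → ∞`. -/
theorem tshirt_example :
    (∀ n : ℕ, 1 ≤ n →
      tshirtFracGT n = ((n : ℚ) + 3) / ((n : ℚ) + 4) ∧
      tshirtFracLT n = (1 + 2 * (n : ℚ) + (n : ℚ) ^ 2) / (1 + 2 * (n : ℚ) + 2 * (n : ℚ) ^ 2)) ∧
    Filter.Tendsto (fun n : ℕ => |((tshirtFracGT n : ℝ)) - ((tshirtFracLT n : ℝ))|)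
      Filter.atTop (nhds (1 / 2)) := by
  refine ⟨fun n hn => ⟨fracGT_eq n hn, fracLT_eq n hn⟩, ?_⟩
  have h0 : Filter.Tendsto (fun n : ℕ => (1 : ℝ) / n) Filter.atTop (nhds 0) :=
    tendsto_one_div_atTop_nhds_zero_nat
  have hg : Filter.Tendsto (fun n : ℕ =>
      (1 + 3 * ((1 : ℝ) / n)) / (1 + 4 * ((1 : ℝ) / n))) Filter.atTop (nhds 1) := by
    have := ((tendsto_const_nhds (x := (1:ℝ))).add (h0.const_mul 3)).div
      ((tendsto_const_nhds (x := (1:ℝ))).add (h0.const_mul 4)) (by norm_num)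
    simpa [Pi.div_def] using this
  have hf : Filter.Tendsto (fun n : ℕ =>
      (((1:ℝ)/n)^2 + 2 * ((1:ℝ)/n) + 1) / (((1:ℝ)/n)^2 + 2 * ((1:ℝ)/n) + 2))
      Filter.atTop (nhds (1 / 2)) := by
    have := (((h0.pow 2).add (h0.const_mul 2)).add (tendsto_const_nhds (x := (1:ℝ)))).div
      (((h0.pow 2).add (h0.const_mul 2)).add (tendsto_const_nhds (x := (2:ℝ)))) (by norm_num)
    simpa [Pi.div_def] using this
  have habs : Filter.Tendsto (fun n : ℕ =>
      |(1 + 3 * ((1 : ℝ) / n)) / (1 + 4 * ((1 : ℝ) / n)) -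
        (((1:ℝ)/n)^2 + 2 * ((1:ℝ)/n) + 1) / (((1:ℝ)/n)^2 + 2 * ((1:ℝ)/n) + 2)|)
      Filter.atTop (nhds (1 / 2)) := by
    have := (hg.sub hf).abs
    have h12 : |(1 : ℝ) - 1 / 2| = 1 / 2 := by norm_num
    rwa [h12] at this
  refine habs.congr' ?_
  filter_upwards [Filter.eventually_ge_atTop 1] with n hn
  have hne : (n : ℝ) ≠ 0 := by positivity
  rw [fracGT_eq n hn, fracLT_eq n hn]
  push_cast
  congr 1
  have h4 : (n : ℝ) + 4 ≠ 0 := by positivity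
  have h2 : 1 + 2 * (n : ℝ) + 2 * (n : ℝ) ^ 2 ≠ 0 := by positivity
  field_simp
end

section
/- Lemma (fairness needed in scoring step, DP case, lower bound construction): Consider the dataset of n = 2m+1 points in ℝ² × [4] × {0,1} with x₁ = (1,3), y₁ = 1, a₁ = 0; xᵢ = (i,2), yᵢ = 2, aᵢ = 1 for 2 ≤ i ≤ m+1; and xᵢ = (i,4), yᵢ = 4, aᵢ = 1 for m+2 ≤ i ≤ 2m+1. Among predictors obtained by thresholding the projection p₁(u₁,u₂) = u₁ subject to exact empirical pairwise DP on this dataset, every such predictor must be constant, so the best achievable MAE is at least 1; whereas thresholding the projection p₂(u₁,u₂) = u₂ with thresholds θ₁ = 0, θ₂ = 2.5, θ₃ = 3.5 yields a predictor satisfying empirical pairwise DP with MAE = 2/(2m+1). -/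
open Finset

/-- The datapoints of the DP-case construction: `x₁ = (1,3)`, `xᵢ = (i,2)` for
`2 ≤ i ≤ m+1`, `xᵢ = (i,4)` for `m+2 ≤ i ≤ 2m+1` (0-indexed here). -/
noncomputable def lemX (m : ℕ) (i : Fin (2 * m + 1)) : ℝ × ℝ :=
  if (i : ℕ) = 0 then (1, 3)
  else if (i : ℕ) ≤ m then ((i : ℕ) + 1, 2) else ((i : ℕ) + 1, 4)

/-- Labels: `y₁ = 1`; `yᵢ = 2` for `2 ≤ i ≤ m+1`; `yᵢ = 4` for `m+2 ≤ i ≤ 2m+1`. -/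
def lemY (m : ℕ) (i : Fin (2 * m + 1)) : ℕ :=
  if (i : ℕ) = 0 then 1 else if (i : ℕ) ≤ m then 2 else 4

/-- Groups: `a₁ = 0`, all other points have `a = 1`. -/
def lemA (m : ℕ) (i : Fin (2 * m + 1)) : ℕ := if (i : ℕ) = 0 then 0 else 1

/-- Threshold predictor with labels in `{1,2,3,4}` given thresholds `θ₁ ≤ θ₂ ≤ θ₃`. -/
noncomputable def thrPred (θ₁ θ₂ θ₃ : ℝ) (s : ℝ) : ℕ :=
  if s ≤ θ₁ then 1 else if s ≤ θ₂ then 2 else if s ≤ θ₃ then 3 else 4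

/-- Empirical pairwise DP of a predictor on the dataset (counting version): the number
of cross-group ordered pairs where the group-0 point's prediction is larger equals the
number where it is smaller. -/
def lemPairDP (m : ℕ) (f : Fin (2 * m + 1) → ℕ) : Prop :=
  (univ.filter (fun p : Fin (2 * m + 1) × Fin (2 * m + 1) =>
      lemA m p.1 = 0 ∧ lemA m p.2 = 1 ∧ f p.2 < f p.1)).card =
  (univ.filter (fun p : Fin (2 * m + 1) × Fin (2 * m + 1) =>
      lemA m p.1 = 0 ∧ lemA m p.2 = 1 ∧ f p.1 < f p.2)).card

/-- Mean absolute error of a predictor on the dataset. -/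
def lemMAE (m : ℕ) (f : Fin (2 * m + 1) → ℕ) : ℚ :=
  (∑ i, |(lemY m i : ℚ) - (f i : ℚ)|) / (2 * (m : ℚ) + 1)

lemma thrPred_mono (θ₁ θ₂ θ₃ s t : ℝ) (h : s ≤ t) :
    thrPred θ₁ θ₂ θ₃ s ≤ thrPred θ₁ θ₂ θ₃ t := by
  unfold thrPred
  split_ifs <;> first | omega | linarith

lemma thrPred_mem (θ₁ θ₂ θ₃ s : ℝ) :
    1 ≤ thrPred θ₁ θ₂ θ₃ s ∧ thrPred θ₁ θ₂ θ₃ s ≤ 4 := by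
  unfold thrPred; split_ifs <;> omega

lemma sum_split (m : ℕ) (A B C : ℚ) :
    ∑ i : Fin (2*m+1), (if (i:ℕ) = 0 then A else if (i:ℕ) ≤ m then B else C)
      = A + m*B + m*C := by
  rw [Fin.sum_univ_eq_sum_range (fun i => if i = 0 then A else if i ≤ m then B else C), Finset.range_eq_Ico,
    ← Finset.sum_Ico_consecutive _ (Nat.zero_le (m+1)) (by omega : m+1 ≤ 2*m+1),
    ← Finset.range_eq_Ico, Finset.sum_range_succ']
  have h1 : ∑ i ∈ Finset.range m,
      (if i + 1 = 0 then A else if i + 1 ≤ m then B else C) = m * B := by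
    rw [Finset.sum_congr rfl (fun i hi => ?_), Finset.sum_const, Finset.card_range,
      nsmul_eq_mul]
    simp only [Finset.mem_range] at hi
    rw [if_neg (by omega), if_pos (by omega)]
  have h2 : ∑ i ∈ Finset.Ico (m+1) (2*m+1),
      (if i = 0 then A else if i ≤ m then B else C) = m * C := by
    rw [Finset.sum_congr rfl (fun i hi => ?_), Finset.sum_const, Nat.card_Ico,
      nsmul_eq_mul]
    · have h : 2*m+1-(m+1) = m := by omega
      rw [h]
    simp only [Finset.mem_Ico] at hi
    rw [if_neg (by omega), if_neg (by omega)]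
  rw [h1, h2]; simp; ring

lemma card_fin_filter (n : ℕ) (Q : ℕ → Prop) [DecidablePred Q] :
    (Finset.univ.filter (fun j : Fin n => Q j.val)).card
      = ((Finset.range n).filter Q).card := by
  rw [Finset.card_filter, Finset.card_filter,
    Fin.sum_univ_eq_sum_range (fun i => if Q i then 1 else 0)]

lemma card_pair (m : ℕ) (Q : ℕ → Prop) [DecidablePred Q] :
    (Finset.univ.filter (fun p : Fin (2*m+1) × Fin (2*m+1) =>
      p.1.val = 0 ∧ Q p.2.val)).card
      = ((Finset.range (2*m+1)).filter Q).card := by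
  rw [← Finset.univ_product_univ, Finset.filter_product (fun a : Fin (2*m+1) => a.val = 0) (fun b : Fin (2*m+1) => Q b.val), Finset.card_product,
    card_fin_filter (2*m+1) (fun j => j = 0), card_fin_filter]
  have : ((Finset.range (2*m+1)).filter (fun j => j = 0)).card = 1 := by
    have : (Finset.range (2*m+1)).filter (fun j => j = 0) = {0} := by
      ext j; simp [Finset.mem_filter, Finset.mem_range]
    rw [this]; rfl
  rw [this, one_mul]

lemma lemX_fst (m : ℕ) (i : Fin (2*m+1)) : (lemX m i).1 = ((i : ℕ) : ℝ) + 1 := by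
  unfold lemX
  split_ifs with h1 h2 <;> simp [h1]

lemma f2_val (m : ℕ) (i : Fin (2*m+1)) :
    thrPred 0 2.5 3.5 (lemX m i).2
      = if (i:ℕ) = 0 then 3 else if (i:ℕ) ≤ m then 2 else 4 := by
  unfold lemX thrPred
  split_ifs <;> norm_num at *

lemma lemA_zero (m : ℕ) (i : Fin (2*m+1)) : lemA m i = 0 ↔ (i:ℕ) = 0 := by
  unfold lemA; split_ifs <;> simp [*]

lemma lemA_one (m : ℕ) (i : Fin (2*m+1)) : lemA m i = 1 ↔ (i:ℕ) ≠ 0 := by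
  unfold lemA; split_ifs <;> simp [*]

/-- Lemma (fairness needed in the scoring step, DP case): on the dataset above, any
threshold predictor on the first-coordinate scoring function `p₁` that satisfies
empirical pairwise DP has MAE at least 1, while the second-coordinate scoring
function `p₂` with thresholds `0, 2.5, 3.5` yields a predictor satisfying empirical
pairwise DP with MAE `2/(2m+1)`. -/
theorem fairness_needed_in_scoring_step_DP (m : ℕ) (hm : 1 ≤ m) :
    (∀ θ₁ θ₂ θ₃ : ℝ, θ₁ ≤ θ₂ → θ₂ ≤ θ₃ →
      lemPairDP m (fun i => thrPred θ₁ θ₂ θ₃ (lemX m i).1) →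
      1 ≤ lemMAE m (fun i => thrPred θ₁ θ₂ θ₃ (lemX m i).1)) ∧
    lemPairDP m (fun i => thrPred 0 2.5 3.5 (lemX m i).2) ∧
    lemMAE m (fun i => thrPred 0 2.5 3.5 (lemX m i).2) = 2 / (2 * (m : ℚ) + 1) := by
  have hm' : (1:ℚ) ≤ (m:ℚ) := by exact_mod_cast hm
  refine ⟨?_, ?_, ?_⟩
  · -- part 1
    intro θ₁ θ₂ θ₃ h12 h23 hdp
    set g : Fin (2*m+1) → ℕ := fun i => thrPred θ₁ θ₂ θ₃ (lemX m i).1 with hg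
    have hmono : ∀ i j : Fin (2*m+1), (i:ℕ) ≤ (j:ℕ) → g i ≤ g j := by
      intro i j hij
      simp only [hg, lemX_fst]
      exact thrPred_mono _ _ _ _ _ (by
        have : ((i:ℕ):ℝ) ≤ ((j:ℕ):ℝ) := by exact_mod_cast hij
        linarith)
    have h0v : ((0 : Fin (2*m+1)) : ℕ) = 0 := rfl
    have hL : (univ.filter (fun p : Fin (2 * m + 1) × Fin (2 * m + 1) =>
        lemA m p.1 = 0 ∧ lemA m p.2 = 1 ∧ g p.2 < g p.1)) = ∅ := by
      rw [Finset.filter_eq_empty_iff]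
      rintro p - ⟨h1, h2, h3⟩
      rw [lemA_zero] at h1
      have := hmono p.1 p.2 (by omega)
      omega
    unfold lemPairDP at hdp
    rw [hL, Finset.card_empty] at hdp
    have hR := Finset.card_eq_zero.mp hdp.symm
    have hconst : ∀ j : Fin (2*m+1), g j = g 0 := by
      intro j
      by_cases hj : (j:ℕ) = 0
      · congr 1; exact Fin.ext (by rw [hj, h0v])
      · have hmem := Finset.filter_eq_empty_iff.mp hR (Finset.mem_univ (0, j))
        have hle : g 0 ≤ g j := hmono 0 j (by omega)
        have : ¬ g 0 < g j := fun h =>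
          hmem ⟨(lemA_zero m 0).mpr h0v, (lemA_one m j).mpr hj, h⟩
        omega
    set c := g 0 with hc
    have hc1 : 1 ≤ c := (thrPred_mem _ _ _ _).1
    have hc4 : c ≤ 4 := (thrPred_mem _ _ _ _).2
    unfold lemMAE
    rw [le_div_iff₀ (by linarith : (0:ℚ) < 2*(m:ℚ)+1)]
    have hsum : ∀ i : Fin (2*m+1), |(lemY m i : ℚ) - (g i : ℚ)|
        = if (i:ℕ) = 0 then |1 - (c:ℚ)| else if (i:ℕ) ≤ m then |2 - (c:ℚ)|
          else |4 - (c:ℚ)| := by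
      intro i
      rw [hconst i]
      unfold lemY
      split_ifs <;> norm_num
    rw [Finset.sum_congr rfl (fun i _ => hsum i), sum_split]
    interval_cases c <;> push_cast <;> norm_num <;> linarith
  · -- part 2 DP
    unfold lemPairDP
    have e1 : (univ.filter (fun p : Fin (2 * m + 1) × Fin (2 * m + 1) =>
        lemA m p.1 = 0 ∧ lemA m p.2 = 1 ∧
          thrPred 0 2.5 3.5 (lemX m p.2).2 < thrPred 0 2.5 3.5 (lemX m p.1).2))
        = univ.filter (fun p : Fin (2 * m + 1) × Fin (2 * m + 1) =>
            (p.1:ℕ) = 0 ∧ (¬(p.2:ℕ) = 0 ∧ (p.2:ℕ) ≤ m)) := by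
      apply Finset.filter_congr
      rintro p -
      simp only [lemA_zero, lemA_one, f2_val]
      constructor
      · rintro ⟨h1, h2, h3⟩
        rw [if_pos h1] at h3
        rw [if_neg h2] at h3
        refine ⟨h1, h2, ?_⟩
        by_contra h
        rw [if_neg h] at h3; omega
      · rintro ⟨h1, h2, h3⟩
        refine ⟨h1, h2, ?_⟩
        rw [if_pos h1, if_neg h2, if_pos h3]; omega
    have e2 : (univ.filter (fun p : Fin (2 * m + 1) × Fin (2 * m + 1) =>
        lemA m p.1 = 0 ∧ lemA m p.2 = 1 ∧
          thrPred 0 2.5 3.5 (lemX m p.1).2 < thrPred 0 2.5 3.5 (lemX m p.2).2))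
        = univ.filter (fun p : Fin (2 * m + 1) × Fin (2 * m + 1) =>
            (p.1:ℕ) = 0 ∧ m < (p.2:ℕ)) := by
      apply Finset.filter_congr
      rintro p -
      simp only [lemA_zero, lemA_one, f2_val]
      constructor
      · rintro ⟨h1, h2, h3⟩
        rw [if_pos h1, if_neg h2] at h3
        refine ⟨h1, ?_⟩
        by_contra h
        rw [if_pos (by omega)] at h3; omega
      · rintro ⟨h1, h2⟩
        refine ⟨h1, by omega, ?_⟩
        rw [if_pos h1, if_neg (by omega), if_neg (by omega)]; omega
    rw [e1, e2, card_pair m (fun j => ¬ j = 0 ∧ j ≤ m), card_pair m (fun j => m < j)]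
    have e3 : (Finset.range (2*m+1)).filter (fun j => ¬ j = 0 ∧ j ≤ m)
        = Finset.Ico 1 (m+1) := by
      ext j; simp [Finset.mem_filter, Finset.mem_range, Finset.mem_Ico]; omega
    have e4 : (Finset.range (2*m+1)).filter (fun j => m < j)
        = Finset.Ico (m+1) (2*m+1) := by
      ext j; simp [Finset.mem_filter, Finset.mem_range, Finset.mem_Ico]; omega
    rw [e3, e4, Nat.card_Ico, Nat.card_Ico]
    omega
  · -- part 2 MAE
    unfold lemMAE
    congr 1
    have hsum : ∀ i : Fin (2*m+1),
        |(lemY m i : ℚ) - ((thrPred 0 2.5 3.5 (lemX m i).2 : ℕ) : ℚ)|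
        = if (i:ℕ) = 0 then (2:ℚ) else if (i:ℕ) ≤ m then 0 else 0 := by
      intro i
      rw [f2_val]
      unfold lemY
      split_ifs <;> norm_num
    rw [Finset.sum_congr rfl (fun i _ => hsum i), sum_split]
    ring
end

section
/- For a threshold predictor f over k ordered labels constructed from scoring function s and thresholds θ, the empirical objective decomposes under a single right-move of one threshold: if threshold θ_{i₀} located at the sorted score s(x_j) is moved to s(x_{j+1}) (yielding θ′), then exactly one datapoint (namely x_{j+1}) changes its prediction, from i₀+1 to i₀, and hence the empirical cost changes by (C_{y_{j+1}, i₀} − C_{y_{j+1}, i₀+1})/n, where C is the cost matrix and n the dataset size. -/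
open Finset

/-- The threshold predictor over `k` ordered labels: `f(x) = i` iff
`θ_{i-1} < s(x) ≤ θ_i` (with `θ₀ = -∞`, `θ_k = +∞`), expressed as
`1 +` the number of thresholds among `θ₁, …, θ_{k-1}` lying strictly below the score. -/
noncomputable def thrLabel (k : ℕ) (θ : ℕ → ℝ) (t : ℝ) : ℕ :=
  1 + ((Finset.Icc 1 (k - 1)).filter (fun i => θ i < t)).card

/-- A single right-move of one threshold: if threshold `θ_{i₀}`, located at the sorted
score `s(x_j)`, is moved to `s(x_{j+1})` (scores are sorted and distinct, and the move
respects `s(x_{j+1}) < θ_{i₀+1}`), then exactly the datapoint `x_{j+1}` changes its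
prediction, from `i₀+1` to `i₀`, and the empirical cost changes by
`(C_{y_{j+1}, i₀} - C_{y_{j+1}, i₀+1})/n`. -/
theorem threshold_right_move (n k : ℕ) (hk : 2 ≤ k)
    (s : Fin n → ℝ) (hs : StrictMono s) (y : Fin n → ℕ) (C : ℕ → ℕ → ℝ)
    (θ : ℕ → ℝ)
    (hmono : ∀ i i' : ℕ, 1 ≤ i → i ≤ i' → i' ≤ k - 1 → θ i ≤ θ i')
    (i₀ j : ℕ) (hi₀l : 1 ≤ i₀) (hi₀u : i₀ ≤ k - 1) (hj : j + 1 < n)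
    (hθi₀ : θ i₀ = s ⟨j, Nat.lt_of_succ_lt hj⟩)
    (hnext : i₀ + 1 ≤ k - 1 → s ⟨j + 1, hj⟩ < θ (i₀ + 1)) :
    (∀ l : Fin n, l ≠ ⟨j + 1, hj⟩ →
        thrLabel k (Function.update θ i₀ (s ⟨j + 1, hj⟩)) (s l) = thrLabel k θ (s l)) ∧
    thrLabel k θ (s ⟨j + 1, hj⟩) = i₀ + 1 ∧
    thrLabel k (Function.update θ i₀ (s ⟨j + 1, hj⟩)) (s ⟨j + 1, hj⟩) = i₀ ∧
    (∑ l, C (y l) (thrLabel k (Function.update θ i₀ (s ⟨j + 1, hj⟩)) (s l))) / n =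
      (∑ l, C (y l) (thrLabel k θ (s l))) / n +
        (C (y ⟨j + 1, hj⟩) i₀ - C (y ⟨j + 1, hj⟩) (i₀ + 1)) / n := by
  set jF : Fin n := ⟨j, Nat.lt_of_succ_lt hj⟩ with hjF
  set j1 : Fin n := ⟨j + 1, hj⟩ with hj1
  have hss : s jF < s j1 := hs (by simp [hjF, hj1, Fin.lt_def])
  have hgt : ∀ i, i₀ + 1 ≤ i → i ≤ k - 1 → s j1 < θ i := by
    intro i h1 h2
    exact lt_of_lt_of_le (hnext (le_trans h1 h2)) (hmono (i₀ + 1) i (by omega) h1 h2)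
  have hle : ∀ i, 1 ≤ i → i ≤ i₀ → θ i ≤ s jF := by
    intro i h1 h2
    calc θ i ≤ θ i₀ := hmono i i₀ h1 h2 hi₀u
    _ = s jF := hθi₀
  have H1 : ∀ l : Fin n, l ≠ j1 →
      thrLabel k (Function.update θ i₀ (s j1)) (s l) = thrLabel k θ (s l) := by
    intro l hl
    unfold thrLabel
    congr 2
    apply Finset.filter_congr
    intro i hi
    rw [Finset.mem_Icc] at hi
    by_cases hii : i = i₀
    · subst hii
      rw [Function.update_self]
      have hlj : (l : ℕ) ≠ j + 1 := fun h => hl (Fin.ext h)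
      rcases lt_or_ge (l : ℕ) (j + 1) with hc | hc
      · have hsl : s l ≤ s jF := hs.monotone (show l ≤ jF by
          simp only [Fin.le_def, hjF]; omega)
        constructor
        · intro h; exact absurd h (not_lt.2 (le_trans hsl hss.le))
        · intro h; rw [hθi₀] at h; exact absurd h (not_lt.2 hsl)
      · have hc' : j + 1 < (l : ℕ) := by omega
        have hsl : s j1 < s l := hs (show j1 < l by simp [Fin.lt_def, hj1, hc'])
        constructor
        · intro _; rw [hθi₀]; exact lt_trans hss hsl
        · intro _; exact hsl
    · rw [Function.update_of_ne hii]
  have Hfilt : (Finset.Icc 1 (k - 1)).filter (fun i => θ i < s j1) = Finset.Icc 1 i₀ := by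
    ext i
    simp only [Finset.mem_filter, Finset.mem_Icc]
    constructor
    · rintro ⟨⟨h1, h2⟩, h3⟩
      refine ⟨h1, ?_⟩
      by_contra hc
      exact absurd h3 (not_lt.2 (hgt i (by omega) h2).le)
    · rintro ⟨h1, h2⟩
      exact ⟨⟨h1, le_trans h2 hi₀u⟩, lt_of_le_of_lt (hle i h1 h2) hss⟩
  have H2 : thrLabel k θ (s j1) = i₀ + 1 := by
    unfold thrLabel
    rw [Hfilt, Nat.card_Icc]
    omega
  have Hfilt' : (Finset.Icc 1 (k - 1)).filter
      (fun i => Function.update θ i₀ (s j1) i < s j1) = Finset.Icc 1 (i₀ - 1) := by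
    ext i
    simp only [Finset.mem_filter, Finset.mem_Icc]
    constructor
    · rintro ⟨⟨h1, h2⟩, h3⟩
      refine ⟨h1, ?_⟩
      by_cases hii : i = i₀
      · subst hii; rw [Function.update_self] at h3; exact absurd h3 (lt_irrefl _)
      · rw [Function.update_of_ne hii] at h3
        by_contra hc
        rcases lt_or_ge i₀ i with hc2 | hc2
        · exact absurd h3 (not_lt.2 (hgt i (by omega) h2).le)
        · omega
    · rintro ⟨h1, h2⟩
      have hii : i ≠ i₀ := by omega
      refine ⟨⟨h1, by omega⟩, ?_⟩
      rw [Function.update_of_ne hii]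
      exact lt_of_le_of_lt (hle i h1 (by omega)) hss
  have H3 : thrLabel k (Function.update θ i₀ (s j1)) (s j1) = i₀ := by
    unfold thrLabel
    rw [Hfilt', Nat.card_Icc]
    omega
  refine ⟨H1, H2, H3, ?_⟩
  have hsum : (∑ l, C (y l) (thrLabel k (Function.update θ i₀ (s j1)) (s l))) =
      (∑ l, C (y l) (thrLabel k θ (s l))) + (C (y j1) i₀ - C (y j1) (i₀ + 1)) := by
    have : ∀ l : Fin n, C (y l) (thrLabel k (Function.update θ i₀ (s j1)) (s l)) =
        C (y l) (thrLabel k θ (s l)) +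
          (if l = j1 then C (y j1) i₀ - C (y j1) (i₀ + 1) else 0) := by
      intro l
      by_cases hl : l = j1
      · subst hl
        rw [H2, H3, if_pos rfl]
        ring
      · rw [H1 l hl, if_neg hl]
        ring
    rw [Finset.sum_congr rfl (fun l _ => this l), Finset.sum_add_distrib,
      Finset.sum_ite_eq' Finset.univ j1]
    simp
  rw [hsum, add_div]
end
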